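/- Let λ be a critical weight with ⟨λ+ρ, α^∨⟩ ∉ ℤ∖{0} for all α ∈ R⁺, and suppose p ∈ S(h) is a prime divisor of the restricted Shapovalov determinant D̄_ε(ε − ν) for some ν, such that all such determinants are nonzero and the restricted Verma module with generic highest weight is simple. Then, assuming simplicity of Δ̄(μ) for all generic critical μ implies nonvanishing of the evaluated determinant at μ, every prime divisor p of D̄_ε(ε − ν) is, up to a scalar, of the form α^∨ + ρ(α^∨) − r with α ∈ R⁺ and r ∈ ℤ∖{0}. -/

import Mathlib

open MvPolynomial

noncomputable section ShapovalovAux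

/-- The affine-linear polynomial `∑ i, a i * X i + b`. -/
def shapLin {m : ℕ} (a : Fin m → ℂ) (b : ℂ) : MvPolynomial (Fin m) ℂ :=
  (∑ i, C (a i) * X i) + C b

lemma shapLin_rename {m : ℕ} (e : Fin m ≃ Fin m) (a : Fin m → ℂ) (b : ℂ) :
    rename e (shapLin a b) = shapLin (a ∘ e.symm) b := by
  simp only [shapLin, map_add, map_sum, map_mul, rename_C, rename_X]
  congr 1
  refine Fintype.sum_equiv e _ _ fun i => ?_
  simp

lemma eval_shapLin {m : ℕ} (a : Fin m → ℂ) (b : ℂ) (μ : Fin m → ℂ) :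
    eval μ (shapLin a b) = (∑ i, a i * μ i) + b := by
  simp [shapLin]

lemma shapLin_ne_zero {m : ℕ} {a : Fin m → ℂ} {b : ℂ} {i0 : Fin m} (h : a i0 ≠ 0) :
    shapLin a b ≠ 0 := by
  intro h0
  have hz : ∀ μ : Fin m → ℂ, (∑ i, a i * μ i) + b = 0 := by
    intro μ
    rw [← eval_shapLin a b μ, h0, map_zero]
  have hb : b = 0 := by simpa using hz 0
  have ha : a i0 + b = 0 := by
    have := hz (Pi.single i0 1)
    simpa [Pi.single_apply, mul_ite, Finset.sum_ite_eq'] using this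
  exact h (by rw [hb, add_zero] at ha; exact ha)

lemma finSuccEquiv_shapLin {m : ℕ} (a : Fin (m + 1) → ℂ) (b : ℂ) :
    finSuccEquiv ℂ m (shapLin a b) =
      Polynomial.C (shapLin (a ∘ Fin.succ) b) + Polynomial.C (C (a 0)) * Polynomial.X := by
  have : shapLin a b
      = C (a 0) * X 0 + ((∑ i : Fin m, C (a i.succ) * X i.succ) + C b) := by
    rw [shapLin, Fin.sum_univ_succ]; ring
  rw [this]
  simp only [map_add, map_mul, map_sum, finSuccEquiv_X_zero, finSuccEquiv_X_succ]
  have hC : ∀ x : ℂ, finSuccEquiv ℂ m (C x) = Polynomial.C (C x) := by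
    intro x
    simp [MvPolynomial.finSuccEquiv_apply]
  simp only [hC]
  have : (∑ i : Fin m, Polynomial.C (C (a i.succ)) * Polynomial.C (X i : MvPolynomial (Fin m) ℂ))
      + Polynomial.C (C b) = Polynomial.C (shapLin (a ∘ Fin.succ) b) := by
    simp only [← Polynomial.C_mul, ← Polynomial.C_add, ← map_sum (Polynomial.C)]
    rfl
  rw [this]; ring

lemma equiv_dvd_iff {R S : Type*} [Monoid R] [Monoid S] (φ : R ≃* S) {x y : R} :
    φ x ∣ φ y ↔ x ∣ y :=
  ⟨fun h => by simpa using map_dvd φ.symm h, fun h => map_dvd φ h⟩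

lemma equiv_assoc {R S : Type*} [CommMonoid R] [CommMonoid S] (φ : R ≃* S) {x y : R}
    (h : Associated (φ x) (φ y)) : Associated x y := by
  obtain ⟨u, hu⟩ := h
  refine ⟨Units.map φ.symm.toMonoidHom u, φ.injective ?_⟩
  simp only [map_mul]
  rw [← hu]
  congr 1
  simp

lemma equiv_isUnit {R S : Type*} [Monoid R] [Monoid S] (φ : R ≃* S) {x : R}
    (h : IsUnit (φ x)) : IsUnit x := by
  have := h.map φ.symm.toMonoidHom
  simpa using this


lemma shap_eq_C_of_totalDegree_eq_zero {m : ℕ} {p : MvPolynomial (Fin m) ℂ}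
    (h : p.totalDegree = 0) : p = C (coeff 0 p) := by
  ext mo
  rw [coeff_C]
  split_ifs with h0
  · rw [← h0]
  · by_contra hne
    have hmem : mo ∈ p.support := mem_support_iff.2 hne
    have hle := le_totalDegree hmem
    rw [h, Nat.le_zero] at hle
    apply h0
    have : ∀ i ∈ mo.support, mo i = 0 := Finset.sum_eq_zero_iff.1 hle
    ext i
    by_cases hi : i ∈ mo.support
    · exact (this i hi).symm
    · simp [Finsupp.notMem_support_iff.1 hi]

lemma shap_avoid : ∀ (m : ℕ) {K : Type*} [Countable K]
    (g : K → MvPolynomial (Fin m) ℂ), (∀ k, g k ≠ 0) →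
    ∃ μ : Fin m → ℂ, ∀ k, eval μ (g k) ≠ 0 := by
  intro m
  induction m with
  | zero =>
    intro K _ g hg
    refine ⟨fun i => i.elim0, fun k hk => hg k ?_⟩
    apply MvPolynomial.funext
    intro x
    rw [Subsingleton.elim x (fun i => i.elim0)]
    simp [hk]
  | succ m' ih =>
    intro K _ g hg
    set G : K → Polynomial (MvPolynomial (Fin m') ℂ) :=
      fun k => finSuccEquiv ℂ m' (g k) with hGdef
    have hG : ∀ k, G k ≠ 0 := by
      intro k h
      exact hg k ((map_eq_zero_iff _ (finSuccEquiv ℂ m').injective).1 h)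
    obtain ⟨μ', hμ'⟩ := ih (fun k => (G k).leadingCoeff)
      (fun k => Polynomial.leadingCoeff_ne_zero.2 (hG k))
    set Q : K → Polynomial ℂ := fun k => (G k).map (eval μ') with hQdef
    have hQ : ∀ k, Q k ≠ 0 := by
      intro k h
      apply hμ' k
      have : (Q k).coeff (G k).natDegree = 0 := by rw [h]; simp
      rwa [hQdef, Polynomial.coeff_map] at this
    have : Uncountable ℂ := Complex.ofReal_injective.uncountable
    have hcount : (⋃ k, {x : ℂ | (Q k).IsRoot x}).Countable :=
      Set.countable_iUnion fun k => (Polynomial.finite_setOf_isRoot (hQ k)).countable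
    have hne : (⋃ k, {x : ℂ | (Q k).IsRoot x}) ≠ Set.univ := by
      intro h
      exact Set.not_countable_univ (h ▸ hcount)
    obtain ⟨t, ht⟩ := (Set.ne_univ_iff_exists_notMem _).1 hne
    rw [Set.mem_iUnion] at ht
    push_neg at ht
    refine ⟨Fin.cons t μ', fun k => ?_⟩
    rw [eval_eq_eval_mv_eval']
    exact ht k

/-- Factorization of the linear polynomial on the `Polynomial` side. -/
lemma shap_factor {m : ℕ} (a : Fin (m + 1) → ℂ) (b : ℂ) (ha : a 0 ≠ 0) :
    finSuccEquiv ℂ m (shapLin a b) =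
      Polynomial.C (C (a 0)) *
        (Polynomial.X - Polynomial.C (C (-(a 0)⁻¹) * shapLin (a ∘ Fin.succ) b)) := by
  rw [finSuccEquiv_shapLin]
  rw [mul_sub, ← Polynomial.C_mul, ← mul_assoc, ← C_mul]
  rw [show a 0 * -(a 0)⁻¹ = -1 by field_simp]
  simp only [map_neg, map_one, neg_one_mul, sub_neg_eq_add]
  ring

lemma shap_assoc_core {m : ℕ} {p : MvPolynomial (Fin (m + 1)) ℂ} (hu : ¬ IsUnit p)
    (hpz : p ≠ 0) {a : Fin (m + 1) → ℂ} {b : ℂ} (ha : a 0 ≠ 0)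
    (hdvd : p ∣ shapLin a b) : Associated p (shapLin a b) := by
  set φ := (MvPolynomial.finSuccEquiv ℂ m).toRingEquiv.toMulEquiv with hφ
  have hΛ := shap_factor a b ha
  set u : MvPolynomial (Fin m) ℂ := C (-(a 0)⁻¹) * shapLin (a ∘ Fin.succ) b with hudef
  have hCunit : IsUnit (Polynomial.C (C (a 0) : MvPolynomial (Fin m) ℂ)) :=
    ((isUnit_iff_ne_zero.2 ha).map C).map Polynomial.C
  have hΛnd : (finSuccEquiv ℂ m (shapLin a b)).natDegree = 1 := by
    rw [hΛ]
    rw [Polynomial.natDegree_mul (by simpa using hCunit.ne_zero) (Polynomial.X_sub_C_ne_zero _)]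
    simp [Polynomial.natDegree_X_sub_C]
  obtain ⟨q, hq⟩ : φ p ∣ φ (shapLin a b) := map_dvd φ hdvd
  have hφp : (φ p : Polynomial (MvPolynomial (Fin m) ℂ)) = finSuccEquiv ℂ m p := rfl
  have hφL : (φ (shapLin a b) : Polynomial (MvPolynomial (Fin m) ℂ))
      = finSuccEquiv ℂ m (shapLin a b) := rfl
  have hLne : finSuccEquiv ℂ m (shapLin a b) ≠ 0 := by
    rw [hΛ]
    exact mul_ne_zero (by simpa using hCunit.ne_zero) (Polynomial.X_sub_C_ne_zero _)
  have hpne : (φ p : Polynomial (MvPolynomial (Fin m) ℂ)) ≠ 0 := by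
    rw [hφp]
    exact (map_eq_zero_iff _ (finSuccEquiv ℂ m).injective).ne.2 hpz
  have hqne : q ≠ 0 := by
    intro h; rw [h, mul_zero] at hq; exact hLne (hφL.symm.trans hq)
  have hsum : (φ p).natDegree + q.natDegree = 1 := by
    rw [← Polynomial.natDegree_mul hpne hqne, ← hq, hφL, hΛnd]
  -- coefficient 1 of Λ is C (a 0)
  have hcoeff : (finSuccEquiv ℂ m (shapLin a b)).coeff 1 = C (a 0) := by
    rw [finSuccEquiv_shapLin]
    simp
  rcases Nat.eq_zero_or_pos (φ p).natDegree with h0 | h1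
  · exfalso
    obtain ⟨p0, hp0⟩ := Polynomial.natDegree_eq_zero.1 h0
    have : p0 * q.coeff 1 = C (a 0) := by
      rw [← hcoeff, ← hφL, hq, ← hp0, Polynomial.coeff_C_mul]
    have hdvd0 : p0 ∣ C (a 0) := Dvd.intro _ this
    have : IsUnit p0 := isUnit_of_dvd_unit hdvd0 ((isUnit_iff_ne_zero.2 ha).map C)
    exact hu (equiv_isUnit φ (hφp ▸ hp0 ▸ this.map Polynomial.C))
  · have hq0 : q.natDegree = 0 := by omega
    obtain ⟨q0, hq0'⟩ := Polynomial.natDegree_eq_zero.1 hq0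
    have : (φ p).coeff 1 * q0 = C (a 0) := by
      rw [← hcoeff, ← hφL, hq, ← hq0', Polynomial.coeff_mul_C]
    have hdvd0 : q0 ∣ C (a 0) := ⟨(φ p).coeff 1, by rw [← this]; ring⟩
    have hq0u : IsUnit q := hq0' ▸ (isUnit_of_dvd_unit hdvd0
      ((isUnit_iff_ne_zero.2 ha).map C)).map Polynomial.C
    refine equiv_assoc φ ?_
    rw [hq]
    exact associated_mul_unit_right _ _ hq0u

lemma shap_assoc_of_dvd_lin {m : ℕ} {p : MvPolynomial (Fin m) ℂ} (hp : Prime p)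
    {a : Fin m → ℂ} {b : ℂ} {i0 : Fin m} (ha : a i0 ≠ 0)
    (hdvd : p ∣ shapLin a b) : Associated p (shapLin a b) := by
  cases m with
  | zero => exact i0.elim0
  | succ m' =>
    set e : Fin (m' + 1) ≃ Fin (m' + 1) := Equiv.swap i0 0 with he
    set ψ := (MvPolynomial.renameEquiv ℂ e).toRingEquiv.toMulEquiv with hψ
    have hψ_eq : ∀ x : MvPolynomial (Fin (m' + 1)) ℂ, ψ x = rename e x := fun _ => rfl
    have hL' : rename e (shapLin a b) = shapLin (a ∘ e.symm) b := shapLin_rename e a b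
    have ha' : (a ∘ e.symm) 0 ≠ 0 := by
      simpa [he, Equiv.symm_swap, Equiv.swap_apply_right] using ha
    have hdvd' : rename e p ∣ shapLin (a ∘ e.symm) b := by
      rw [← hL', ← hψ_eq, ← hψ_eq]
      exact map_dvd ψ hdvd
    have hu' : ¬ IsUnit (rename e p) := by
      intro h
      exact hp.not_unit (equiv_isUnit ψ h)
    have hz' : rename e p ≠ 0 := by
      intro h
      exact hp.ne_zero ((map_eq_zero_iff _ (MvPolynomial.renameEquiv ℂ e).injective).1 h)
    have := shap_assoc_core hu' hz' ha' hdvd'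
    refine equiv_assoc ψ ?_
    rw [hψ_eq, hψ_eq, hL']
    exact this

lemma shap_exists_eval_zero {m : ℕ} {p : MvPolynomial (Fin m) ℂ} (hp : Prime p)
    {K : Type*} [Countable K] (a : K → Fin m → ℂ) (b : K → ℂ)
    (hne : ∀ k, shapLin (a k) (b k) ≠ 0) (hnd : ∀ k, ¬ p ∣ shapLin (a k) (b k)) :
    ∃ μ : Fin m → ℂ, eval μ p = 0 ∧ ∀ k, eval μ (shapLin (a k) (b k)) ≠ 0 := by
  classical
  -- find a variable occurring in p
  have hptd : p.totalDegree ≠ 0 := by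
    intro h
    apply hp.not_unit
    have hc : coeff 0 p ≠ 0 := by
      intro h0
      exact hp.ne_zero (by rw [shap_eq_C_of_totalDegree_eq_zero h, h0, map_zero])
    rw [shap_eq_C_of_totalDegree_eq_zero h]
    exact (isUnit_iff_ne_zero.2 hc).map C
  obtain ⟨mo, hmo, j, hj⟩ : ∃ mo ∈ p.support, ∃ j, mo j ≠ 0 := by
    by_contra hcon
    push_neg at hcon
    exact hptd ((MvPolynomial.totalDegree_eq_zero_iff _ p).2 hcon)
  have hdj : 0 < degreeOf j p := by
    rw [degreeOf_eq_sup]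
    exact lt_of_lt_of_le (Nat.pos_of_ne_zero hj) (Finset.le_sup (f := fun mm => mm j) hmo)
  cases m with
  | zero => exact j.elim0
  | succ m' =>
    set e : Fin (m' + 1) ≃ Fin (m' + 1) := Equiv.swap j 0 with he
    set ψ := (MvPolynomial.renameEquiv ℂ e).toRingEquiv.toMulEquiv with hψ
    have hψ_eq : ∀ x : MvPolynomial (Fin (m' + 1)) ℂ, ψ x = rename e x := fun _ => rfl
    set p' := rename (⇑e) p with hp'def
    have hp' : Prime p' := by
      rw [hp'def, ← hψ_eq]
      exact (MulEquiv.prime_iff ψ).2 hp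
    have hd0 : 0 < degreeOf 0 p' := by
      have h2 := degreeOf_rename_of_injective (e.injective) j (p := p)
      rw [show e j = 0 from Equiv.swap_apply_left j 0] at h2
      rw [hp'def, h2]
      exact hdj
    set a' : K → Fin (m' + 1) → ℂ := fun k => a k ∘ e.symm with ha'def
    have hL' : ∀ k, rename (⇑e) (shapLin (a k) (b k)) = shapLin (a' k) (b k) :=
      fun k => shapLin_rename e (a k) (b k)
    have hne' : ∀ k, shapLin (a' k) (b k) ≠ 0 := by
      intro k h
      rw [← hL' k] at h
      exact hne k ((map_eq_zero_iff _ (rename_injective (⇑e) e.injective)).1 h)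
    have hnd' : ∀ k, ¬ p' ∣ shapLin (a' k) (b k) := by
      intro k hdvd
      apply hnd k
      rw [← hL'] at hdvd
      have h2 : ψ p ∣ ψ (shapLin (a k) (b k)) := hdvd
      simpa using map_dvd ψ.symm h2
    -- pass to the polynomial side
    have hPnd : 0 < (finSuccEquiv ℂ m' p').natDegree := by
      rw [natDegree_finSuccEquiv]; exact hd0
    have hPne : finSuccEquiv ℂ m' p' ≠ 0 := by
      intro h
      exact hp'.ne_zero ((map_eq_zero_iff _ (finSuccEquiv ℂ m').injective).1 h)
    -- the avoidance family
    have hg : ∀ o : Option K,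
        (Option.elim o (finSuccEquiv ℂ m' p').leadingCoeff fun k =>
          if a' k 0 = 0 then shapLin (a' k ∘ Fin.succ) (b k)
          else Polynomial.eval (C (-(a' k 0)⁻¹) * shapLin (a' k ∘ Fin.succ) (b k))
            (finSuccEquiv ℂ m' p')) ≠ 0 := by
      rintro (_ | k)
      · exact Polynomial.leadingCoeff_ne_zero.2 hPne
      · simp only [Option.elim]
        split_ifs with h0
        · -- a' k 0 = 0 : the truncated linear form must be nonzero
          intro hM
          apply hne' k
          apply (finSuccEquiv ℂ m').injective
          rw [finSuccEquiv_shapLin, h0, hM]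
          simp
        · -- a' k 0 ≠ 0 : the "resultant" is nonzero
          intro hrk
          have hXdvd : Polynomial.X -
              Polynomial.C (C (-(a' k 0)⁻¹) * shapLin (a' k ∘ Fin.succ) (b k)) ∣
              finSuccEquiv ℂ m' p' :=
            Polynomial.dvd_iff_isRoot.2 hrk
          obtain ⟨w, hw⟩ := hXdvd
          have hfact := shap_factor (a' k) (b k) h0
          have hΛdvd : finSuccEquiv ℂ m' (shapLin (a' k) (b k)) ∣ finSuccEquiv ℂ m' p' := by
            refine ⟨Polynomial.C (C ((a' k 0)⁻¹)) * w, ?_⟩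
            rw [hfact, hw]
            symm
            have hone : Polynomial.C (C (a' k 0) : MvPolynomial (Fin m') ℂ) *
                Polynomial.C (C ((a' k 0)⁻¹) : MvPolynomial (Fin m') ℂ) = 1 := by
              rw [← Polynomial.C_mul, ← C_mul, mul_inv_cancel₀ h0]
              simp
            calc Polynomial.C (C (a' k 0)) *
                  (Polynomial.X - Polynomial.C (C (-(a' k 0)⁻¹) *
                    shapLin (a' k ∘ Fin.succ) (b k)))
                  * (Polynomial.C (C ((a' k 0)⁻¹)) * w)
                = (Polynomial.C (C (a' k 0)) * Polynomial.C (C ((a' k 0)⁻¹)))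
                  * ((Polynomial.X - Polynomial.C (C (-(a' k 0)⁻¹) *
                    shapLin (a' k ∘ Fin.succ) (b k))) * w) := by ring
              _ = (Polynomial.X - Polynomial.C (C (-(a' k 0)⁻¹) *
                    shapLin (a' k ∘ Fin.succ) (b k))) * w := by rw [hone, one_mul]
          have hLdvd : shapLin (a' k) (b k) ∣ p' := by
            have h2 := map_dvd ((finSuccEquiv ℂ m').symm :
              Polynomial (MvPolynomial (Fin m') ℂ) ≃ₐ[ℂ] _) hΛdvd
            simpa using h2
          obtain ⟨w', hw'⟩ := hLdvd
          rcases hp'.2.2 _ _ hw'.dvd with hd1 | hd2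
          · exact hnd' k hd1
          · -- then the linear form is a unit, contradicting its degree 1
            obtain ⟨w'', hw''⟩ := hd2
            have hcan : p' * 1 = p' * (shapLin (a' k) (b k) * w'') := by
              rw [mul_one]
              calc p' = shapLin (a' k) (b k) * w' := hw'
                _ = shapLin (a' k) (b k) * (p' * w'') := by rw [← hw'']
                _ = p' * (shapLin (a' k) (b k) * w'') := by ring
            have hone : (1 : MvPolynomial (Fin (m' + 1)) ℂ)
                = shapLin (a' k) (b k) * w'' := mul_left_cancel₀ hp'.ne_zero hcan
            have hunit : IsUnit (shapLin (a' k) (b k)) :=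
              IsUnit.of_mul_eq_one _ hone.symm
            have hunit2 : IsUnit (finSuccEquiv ℂ m' (shapLin (a' k) (b k))) :=
              hunit.map (finSuccEquiv ℂ m')
            have hdeg0 := Polynomial.natDegree_eq_zero_of_isUnit hunit2
            have hdeg1 : (finSuccEquiv ℂ m' (shapLin (a' k) (b k))).natDegree = 1 := by
              have hC : (Polynomial.C (C (a' k 0) : MvPolynomial (Fin m') ℂ)) ≠ 0 := by
                simpa using (((isUnit_iff_ne_zero.2 h0).map
                  (C : ℂ →+* MvPolynomial (Fin m') ℂ)).map Polynomial.C).ne_zero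
              rw [hfact, Polynomial.natDegree_mul hC (Polynomial.X_sub_C_ne_zero _),
                Polynomial.natDegree_C, Polynomial.natDegree_X_sub_C]
            omega
    obtain ⟨μ', hμ'⟩ := shap_avoid m' _ hg
    have hlead : eval μ' (finSuccEquiv ℂ m' p').leadingCoeff ≠ 0 := by
      simpa using hμ' none
    have hQdeg : ((finSuccEquiv ℂ m' p').map (eval μ')).natDegree
        = (finSuccEquiv ℂ m' p').natDegree :=
      Polynomial.natDegree_map_of_leadingCoeff_ne_zero _ hlead
    have hQpos : 0 < ((finSuccEquiv ℂ m' p').map (eval μ')).degree := by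
      rw [← Polynomial.natDegree_pos_iff_degree_pos, hQdeg]
      exact hPnd
    obtain ⟨x, hx⟩ := Complex.exists_root hQpos
    refine ⟨(Fin.cons x μ') ∘ e, ?_, ?_⟩
    · have h2 : eval (Fin.cons x μ') p' = 0 := by
        rw [eval_eq_eval_mv_eval']; exact hx
      rw [hp'def, eval_rename] at h2
      exact h2
    · intro k
      have hLk : eval ((Fin.cons x μ') ∘ e) (shapLin (a k) (b k))
          = eval (Fin.cons x μ') (shapLin (a' k) (b k)) := by
        rw [← hL' k, eval_rename]
      rw [hLk, eval_eq_eval_mv_eval', finSuccEquiv_shapLin]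
      simp only [Polynomial.map_add, Polynomial.map_mul, Polynomial.map_C, Polynomial.map_X,
        Polynomial.eval_add, Polynomial.eval_mul, Polynomial.eval_C, Polynomial.eval_X, eval_C]
      by_cases h0 : a' k 0 = 0
      · have h3 := hμ' (some k)
        simp only [Option.elim, if_pos h0] at h3
        rw [h0]
        simpa using h3
      · intro hzero
        have h3 := hμ' (some k)
        simp only [Option.elim, if_neg h0] at h3
        apply h3
        have hx' : x = eval μ' (C (-(a' k 0)⁻¹) * shapLin (a' k ∘ Fin.succ) (b k)) := by
          simp only [map_mul, eval_C]
          apply mul_left_cancel₀ h0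
          rw [← mul_assoc, mul_neg, mul_inv_cancel₀ h0]
          linear_combination hzero
        have hcomm : eval μ' (Polynomial.eval
              (C (-(a' k 0)⁻¹) * shapLin (a' k ∘ Fin.succ) (b k)) (finSuccEquiv ℂ m' p'))
            = Polynomial.eval
              (eval μ' (C (-(a' k 0)⁻¹) * shapLin (a' k ∘ Fin.succ) (b k)))
              ((finSuccEquiv ℂ m' p').map (eval μ')) := by
          rw [← Polynomial.eval₂_hom, Polynomial.eval₂_eq_eval_map]
        rw [hcomm, ← hx']
        exact hx
    

end ShapovalovAux

/-- Let `λ` be a critical weight with `⟨λ+ρ, α^∨⟩ ∉ ℤ∖{0}` for all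
`α ∈ R⁺` (the generic condition), and let `D̄ ∈ S(h)` be a (nonzero) restricted
Shapovalov determinant `D̄_ε(ε − ν)`.  Assuming that the determinant does not vanish
when evaluated at any generic critical weight `μ` (which follows from simplicity of
`Δ̄(μ)` for generic `μ`), every prime divisor `p` of `D̄` is, up to a scalar (i.e. up to
associates), of the form `α^∨ + ρ(α^∨) − r` with `α ∈ R⁺` and `r ∈ ℤ∖{0}`.  Here
`S(h)` is modelled as `MvPolynomial (Fin n) ℂ` (polynomial functions on `h*`), the
coroot `α^∨` corresponds to the linear form `∑ i, v α i · Xᵢ` and `ρ(α^∨) = c α`. -/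
theorem prime_divisors_of_restricted_shapovalov_det
    (n : ℕ) {ι : Type*} [Fintype ι]          -- ι indexes the positive finite roots R⁺
    (v : ι → Fin n → ℂ)                      -- coefficient vectors of the coroots α^∨
    (c : ι → ℂ)                              -- the constants ρ(α^∨)
    (hv : ∀ a : ι, v a ≠ 0)                  -- coroots are nonzero linear forms
    (D : MvPolynomial (Fin n) ℂ)             -- the restricted determinant D̄_ε(ε − ν)
    (hD : D ≠ 0)
    -- nonvanishing of the evaluated determinant at every generic weight μ:
    (hgen : ∀ μ : Fin n → ℂ,
      (∀ (a : ι) (r : ℤ), r ≠ 0 → (∑ i, v a i * μ i) + c a ≠ (r : ℂ)) →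
      MvPolynomial.eval μ D ≠ 0) :
    ∀ p : MvPolynomial (Fin n) ℂ, Prime p → p ∣ D →
      ∃ (a : ι) (r : ℤ), r ≠ 0 ∧
        Associated p
          ((∑ i, MvPolynomial.C (v a i) * MvPolynomial.X i)
            + MvPolynomial.C (c a - (r : ℂ))) := by
  intro p hp hdvd
  classical
  by_cases hex : ∃ (a : ι) (r : ℤ), r ≠ 0 ∧ p ∣ shapLin (v a) (c a - (r : ℂ))
  · obtain ⟨a, r, hr, hdl⟩ := hex
    obtain ⟨i0, hi0⟩ : ∃ i0, v a i0 ≠ 0 := Function.ne_iff.1 (hv a)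
    exact ⟨a, r, hr, shap_assoc_of_dvd_lin hp hi0 hdl⟩
  · exfalso
    push_neg at hex
    obtain ⟨μ, hμp, hμL⟩ := shap_exists_eval_zero hp
      (K := ι × {r : ℤ // r ≠ 0})
      (fun k => v k.1) (fun k => c k.1 - ((k.2 : ℤ) : ℂ))
      (fun k => by
        obtain ⟨i0, hi0⟩ : ∃ i0, v k.1 i0 ≠ 0 := Function.ne_iff.1 (hv k.1)
        exact shapLin_ne_zero hi0)
      (fun k => hex k.1 k.2.1 k.2.2)
    have hgen' := hgen μ (by
      intro a r hr heq
      apply hμL (a, ⟨r, hr⟩)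
      rw [eval_shapLin]
      linear_combination heq)
    obtain ⟨w, hw⟩ := hdvd
    apply hgen'
    rw [hw, map_mul, hμp, zero_mul]
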